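/- arXiv:2009.10206 — 2 statements merged into one kernel-verified Lean document; each statement's English description precedes it below -/
import Mathlib

section
/- Let α > −1 and n ∈ ℕ, and suppose L_{n+1}^{(α+1)} and L_n^{(α)} have no common zeros. Let 0 < z_1 < ⋯ < z_{n+1} be the zeros of L_{n+1}^{(α+1)} and 0 < x_1 < ⋯ < x_n be the zeros of L_n^{(α)}. Then the zeros interlace, i.e. z_1 < x_1 < z_2 < x_2 < ⋯ < x_n < z_{n+1}, if and only if the smallest zero z_1 of L_{n+1}^{(α+1)} satisfies z_1 > n+1. -/
open Polynomial

/-- The generalized Laguerre polynomial `L_n^{(α)}(x) =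
∑_{k=0}^{n} (−1)^k [∏_{j=k+1}^{n}(α+j)] / ((n−k)!·k!) · x^k`. -/
noncomputable def laguerre (α : ℝ) (n : ℕ) : Polynomial ℝ :=
  ∑ k ∈ Finset.range (n + 1),
    Polynomial.C ((-1 : ℝ) ^ k * (∏ j ∈ Finset.Icc (k + 1) n, (α + (j : ℝ))) /
      ((n - k).factorial * k.factorial)) * Polynomial.X ^ k

lemma laguerre_coeff (α : ℝ) (n m : ℕ) :
    (laguerre α n).coeff m = if m ≤ n then
      ((-1:ℝ)^m * (∏ j ∈ Finset.Icc (m+1) n, (α + (j:ℝ))) /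
        ((n-m).factorial * m.factorial)) else 0 := by
  unfold laguerre
  rw [Polynomial.finset_sum_coeff]
  simp only [Polynomial.coeff_C_mul, Polynomial.coeff_X_pow, mul_ite, mul_one, mul_zero]
  rw [Finset.sum_ite_eq (Finset.range (n+1)) m]
  simp [Nat.lt_succ_iff]

lemma laguerre_natDegree (α : ℝ) (n : ℕ) : (laguerre α n).natDegree = n := by
  have h1 : (laguerre α n).natDegree ≤ n := by
    unfold laguerre
    refine (Polynomial.natDegree_sum_le _ _).trans ?_
    simp only [Finset.fold_max_le]
    constructor
    · exact Nat.zero_le n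
    · intro k hk
      refine (Polynomial.natDegree_C_mul_le _ _).trans ?_
      simp [Nat.lt_succ_iff.mp (Finset.mem_range.mp hk)]
  have h2 : (laguerre α n).coeff n ≠ 0 := by
    rw [laguerre_coeff]
    simp [Nat.factorial_ne_zero]
  exact le_antisymm h1 (Polynomial.le_natDegree_of_ne_zero h2)

lemma laguerre_leadingCoeff (α : ℝ) (n : ℕ) :
    (laguerre α n).leadingCoeff = (-1:ℝ)^n / n.factorial := by
  rw [Polynomial.leadingCoeff, laguerre_natDegree, laguerre_coeff]
  simp

lemma laguerre_ne_zero (α : ℝ) (n : ℕ) : laguerre α n ≠ 0 := by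
  intro h
  have h2 := laguerre_leadingCoeff α n
  rw [h, Polynomial.leadingCoeff_zero] at h2
  have : ((-1:ℝ)^n / n.factorial) ≠ 0 := by
    apply div_ne_zero
    · exact pow_ne_zero _ (by norm_num)
    · exact_mod_cast n.factorial_ne_zero
  exact this h2.symm

lemma prod_shift (f : ℕ → ℝ) (a b : ℕ) :
    ∏ j ∈ Finset.Icc (a+1) (b+1), f j = ∏ j ∈ Finset.Icc a b, f (j+1) := by
  rw [← Finset.map_add_right_Icc, Finset.prod_map]; rfl

-- scalar lemma for identity III
lemma scalarIII (α : ℝ) (n m : ℕ) :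
    (α+(n:ℝ)+2) * (laguerre (α+1) n).coeff m = ((n:ℝ)+1-(m:ℝ)) * (laguerre (α+1) (n+1)).coeff m := by
  rw [laguerre_coeff, laguerre_coeff]
  by_cases hm : m ≤ n
  · rw [if_pos hm, if_pos (hm.trans (Nat.le_succ n))]
    rw [Finset.prod_Icc_succ_top (by omega : m+1 ≤ n+1)]
    have h1 : n + 1 - m = (n - m) + 1 := by omega
    rw [h1, Nat.factorial_succ]
    have h2 : ((n:ℝ) - (m:ℝ)) + 1 = ((n - m : ℕ) : ℝ) + 1 := by
      rw [Nat.cast_sub hm]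
    push_cast [h1]
    have hf1 : ((n-m).factorial : ℝ) ≠ 0 := Nat.cast_ne_zero.mpr (Nat.factorial_ne_zero _)
    have hf2 : (m.factorial : ℝ) ≠ 0 := Nat.cast_ne_zero.mpr (Nat.factorial_ne_zero _)
    have h3 : ((n:ℝ) - (m:ℝ) + 1) ≠ 0 := by
      have := (Nat.cast_le (α := ℝ)).mpr hm
      linarith
    field_simp
    push_cast [Nat.cast_sub hm]
    ring
  · rw [if_neg hm]
    by_cases hm2 : m ≤ n + 1
    · have : m = n + 1 := by omega
      subst this
      rw [if_pos le_rfl]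
      push_cast
      ring
    · rw [if_neg hm2]
      ring

lemma identity_III (α : ℝ) (n : ℕ) :
    X * derivative (laguerre (α+1) (n+1)) =
      C ((n:ℝ)+1) * laguerre (α+1) (n+1) - C (α+(n:ℝ)+2) * laguerre (α+1) n := by
  ext m
  rw [Polynomial.coeff_sub, Polynomial.coeff_C_mul, Polynomial.coeff_C_mul]
  cases m with
  | zero =>
    rw [Polynomial.mul_coeff_zero]
    simp only [Polynomial.coeff_X_zero, zero_mul]
    have hs := scalarIII α n 0
    push_cast at hs
    linear_combination hs
  | succ k =>
    rw [Polynomial.coeff_X_mul, Polynomial.coeff_derivative]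
    have hs := scalarIII α n (k+1)
    push_cast at hs
    linear_combination hs

lemma identity_V (α : ℝ) (hα : -1 < α) (n : ℕ) :
    (X - C ((n:ℝ)+1)) * laguerre (α+1) n =
      C (α+(n:ℝ)+1) * laguerre α n - C ((n:ℝ)+1) * laguerre (α+1) (n+1) := by
  have hn0 : (0:ℝ) ≤ (n:ℝ) := Nat.cast_nonneg n
  have hden : α + (n:ℝ) + 1 ≠ 0 := by linarith
  ext m
  rw [sub_mul, Polynomial.coeff_sub, Polynomial.coeff_sub, Polynomial.coeff_C_mul,
    Polynomial.coeff_C_mul, Polynomial.coeff_C_mul]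
  cases m with
  | zero =>
    rw [Polynomial.mul_coeff_zero]
    simp only [Polynomial.coeff_X_zero, zero_mul]
    rw [laguerre_coeff, laguerre_coeff, laguerre_coeff, if_pos (Nat.zero_le n),
      if_pos (Nat.zero_le n), if_pos (Nat.zero_le (n+1))]
    have hU : ∏ j ∈ Finset.Icc 1 (n+1), (α + 1 + (j:ℝ)) =
        (∏ j ∈ Finset.Icc 1 n, (α + 1 + (j:ℝ))) * (α + 1 + ((n+1:ℕ):ℝ)) :=
      Finset.prod_Icc_succ_top (by omega) _
    have hW : (∏ j ∈ Finset.Icc 1 n, (α + (j:ℝ))) * (α + ((n+1:ℕ):ℝ)) =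
        (α + 1) * ∏ j ∈ Finset.Icc 1 n, (α + 1 + (j:ℝ)) := by
      rw [← Finset.prod_Icc_succ_top (by omega : 1 ≤ n+1) (fun j => α + (j:ℝ))]
      rw [← Finset.Ico_add_one_right_eq_Icc, Finset.prod_eq_prod_Ico_succ_bot (by omega)]
      rw [Finset.Ico_add_one_right_eq_Icc, prod_shift (fun j => α + (j:ℝ)) 1 n]
      rw [show ((1:ℕ):ℝ) = (1:ℝ) by norm_num]
      congr 1
      apply Finset.prod_congr rfl
      intro j _
      push_cast
      ring
    push_cast at hU hW ⊢
    rw [hU]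
    have hW' : (∏ j ∈ Finset.Icc 1 n, (α + (j:ℝ))) =
        (α + 1) * (∏ j ∈ Finset.Icc 1 n, (α + 1 + (j:ℝ))) / (α + (n:ℝ) + 1) := by
      field_simp
      linear_combination hW
    rw [hW']
    have h1 : (n+1-0) = n+1 := by omega
    have hf1 : ((n-0).factorial : ℝ) ≠ 0 := Nat.cast_ne_zero.mpr (Nat.factorial_ne_zero _)
    have hf2 : ((n+1).factorial : ℝ) ≠ 0 := Nat.cast_ne_zero.mpr (Nat.factorial_ne_zero _)
    rw [Nat.sub_zero] at hf1 ⊢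
    rw [Nat.factorial_succ]
    push_cast
    field_simp
    ring
  | succ k =>
    rw [Polynomial.coeff_X_mul]
    rw [laguerre_coeff, laguerre_coeff, laguerre_coeff, laguerre_coeff]
    by_cases hk : k + 1 ≤ n
    · rw [if_pos (by omega : k ≤ n), if_pos hk, if_pos hk, if_pos (by omega : k+1 ≤ n+1)]
      -- bottom extraction for the k-coefficient product
      have hbot : ∏ j ∈ Finset.Icc (k+1) n, (α + 1 + (j:ℝ)) =
          (α + 1 + ((k+1:ℕ):ℝ)) * ∏ j ∈ Finset.Icc (k+2) n, (α + 1 + (j:ℝ)) := by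
        rw [← Finset.Ico_add_one_right_eq_Icc, Finset.prod_eq_prod_Ico_succ_bot (by omega), Finset.Ico_add_one_right_eq_Icc]
      have htop : ∏ j ∈ Finset.Icc (k+1+1) (n+1), (α + 1 + (j:ℝ)) =
          (∏ j ∈ Finset.Icc (k+2) n, (α + 1 + (j:ℝ))) * (α + 1 + ((n+1:ℕ):ℝ)) :=
        Finset.prod_Icc_succ_top (by omega) _
      have hT : (∏ j ∈ Finset.Icc (k+2) n, (α + (j:ℝ))) * (α + ((n+1:ℕ):ℝ)) =
          (α + ((k+2:ℕ):ℝ)) * ∏ j ∈ Finset.Icc (k+2) n, (α + 1 + (j:ℝ)) := by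
        rw [← Finset.prod_Icc_succ_top (by omega : k+2 ≤ n+1) (fun j => α + (j:ℝ))]
        rw [← Finset.Ico_add_one_right_eq_Icc, Finset.prod_eq_prod_Ico_succ_bot (by omega),
          Finset.Ico_add_one_right_eq_Icc]
        rw [show (k+3) = (k+2)+1 by ring, prod_shift (fun j => α + (j:ℝ)) (k+2) n]
        congr 1
        apply Finset.prod_congr rfl
        intro j _
        push_cast
        ring
      have hT' : (∏ j ∈ Finset.Icc (k+2) n, (α + (j:ℝ))) =
          (α + ((k+2:ℕ):ℝ)) * (∏ j ∈ Finset.Icc (k+2) n, (α + 1 + (j:ℝ))) / (α + (n:ℝ) + 1) := by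
        push_cast at hT ⊢
        field_simp
        linear_combination hT
      rw [hbot, htop, hT']
      have h1 : n - k = (n - (k+1)) + 1 := by omega
      have h2 : n + 1 - (k+1) = (n - (k+1)) + 1 := by omega
      rw [h1, h2, Nat.factorial_succ ((n - (k+1)))]
      rw [Nat.factorial_succ k]
      have hc : ((n - (k+1) : ℕ) : ℝ) = (n:ℝ) - (k:ℝ) - 1 := by
        have := Nat.cast_sub hk (R := ℝ)
        push_cast at this ⊢
        linarith
      have hf1 : ((n-(k+1)).factorial : ℝ) ≠ 0 := Nat.cast_ne_zero.mpr (Nat.factorial_ne_zero _)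
      have hf2 : (k.factorial : ℝ) ≠ 0 := Nat.cast_ne_zero.mpr (Nat.factorial_ne_zero _)
      have hk1 : ((n:ℝ) - (k:ℝ)) ≠ 0 := by
        have := (Nat.cast_le (α := ℝ)).mpr hk
        push_cast at this
        intro h
        rw [sub_eq_zero] at h
        linarith
      have hf1' : (((n-(1+k)).factorial : ℕ) : ℝ) ≠ 0 := by
        rw [show 1+k = k+1 from by ring]
        exact hf1
      push_cast [hc]
      field_simp
      rw [show (n:ℝ) - k - 1 + 1 = n - k by ring]
      field_simp
      ring
    · rw [if_neg hk, if_neg hk]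
      by_cases hk2 : k ≤ n
      · have hkn : k = n := by omega
        subst hkn
        rw [if_pos le_rfl, if_pos le_rfl]
        rw [Finset.Icc_eq_empty (by omega), Finset.Icc_eq_empty (by omega)]
        simp only [Finset.prod_empty, Nat.sub_self, Nat.factorial_zero,
          Nat.add_sub_cancel_left, Nat.succ_sub_succ]
        rw [Nat.factorial_succ k]
        have hf2 : (k.factorial : ℝ) ≠ 0 := Nat.cast_ne_zero.mpr (Nat.factorial_ne_zero _)
        push_cast
        field_simp
        ring
      · rw [if_neg hk2, if_neg (by omega : ¬ (k+1 ≤ n+1))]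
        ring
lemma factorization' (p : Polynomial ℝ) (d : ℕ) (hdeg : p.natDegree = d) (hp : p ≠ 0)
    (w : ℕ → ℝ) (hw : ∀ i ∈ Finset.Icc 1 d, ∀ j ∈ Finset.Icc 1 d, i < j → w i < w j)
    (hroots : ∀ t, p.eval t = 0 ↔ ∃ i ∈ Finset.Icc 1 d, w i = t) :
    p = C p.leadingCoeff * ∏ i ∈ Finset.Icc 1 d, (X - C (w i)) := by
  have hinj : ∀ i ∈ Finset.Icc 1 d, ∀ j ∈ Finset.Icc 1 d, w i = w j → i = j := by
    intro i hi j hj hij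
    by_contra hne
    rcases Nat.lt_or_ge i j with h | h
    · exact absurd hij (ne_of_lt (hw i hi j hj h))
    · have : i ≠ j := hne
      have hji : j < i := by omega
      exact absurd hij.symm (ne_of_lt (hw j hj i hi hji))
  set s : Finset ℝ := (Finset.Icc 1 d).image w with hs
  have hcard : s.card = d := by
    rw [hs, Finset.card_image_of_injOn hinj, Nat.card_Icc]
    omega
  have hsub : s.val ≤ p.roots := by
    rw [Multiset.le_iff_count]
    intro a
    by_cases ha : a ∈ s
    · have h1 : s.val.count a = 1 := by
        rw [Multiset.count_eq_one_of_mem s.nodup ha]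
      rw [h1]
      rw [Multiset.one_le_count_iff_mem]
      rw [Polynomial.mem_roots hp]
      rw [hs] at ha
      obtain ⟨i, hi, hia⟩ := Finset.mem_image.mp ha
      exact (hroots a).mpr ⟨i, hi, hia⟩
    · rw [Multiset.count_eq_zero_of_notMem ha]
      exact Nat.zero_le _
  have hre : p.roots = s.val := by
    refine (Multiset.eq_of_le_of_card_le hsub ?_).symm
    have h1 : Multiset.card s.val = d := hcard
    rw [h1, ← hdeg]
    exact Polynomial.card_roots' p
  have hsplits : Polynomial.Splits p := by
    rw [Polynomial.splits_iff_card_roots, hre, hdeg]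
    exact hcard
  have := Polynomial.Splits.eq_prod_roots hsplits
  rw [hre] at this
  have hprod : (Multiset.map (fun a => X - C a) s.val).prod = ∏ a ∈ s, (X - C a) := rfl
  rw [hprod, hs, Finset.prod_image hinj] at this
  exact this

lemma key_eval (α : ℝ) (hα : -1 < α) (n : ℕ) (t : ℝ)
    (ht : (laguerre (α+1) (n+1)).eval t = 0) :
    (α+(n:ℝ)+2) * ((α+(n:ℝ)+1) * (laguerre α n).eval t) =
      ((n:ℝ)+1-t) * t * (Polynomial.derivative (laguerre (α+1) (n+1))).eval t := by
  have e3 := congrArg (Polynomial.eval t) (identity_III α n)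
  have e5 := congrArg (Polynomial.eval t) (identity_V α hα n)
  simp only [Polynomial.eval_mul, Polynomial.eval_sub, Polynomial.eval_C, Polynomial.eval_X,
    ht, mul_zero, zero_sub, sub_zero] at e3 e5
  linear_combination (-(α+(n:ℝ)+2)) * e5 + (t-((n:ℝ)+1)) * e3

lemma deriv_eval (lc : ℝ) (s : Finset ℕ) (w : ℕ → ℝ) (i : ℕ) (hi : i ∈ s) :
    Polynomial.eval (w i) (Polynomial.derivative
      (Polynomial.C lc * ∏ j ∈ s, (Polynomial.X - Polynomial.C (w j)))) =
      lc * ∏ j ∈ s.erase i, (w i - w j) := by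
  rw [← Finset.mul_prod_erase s _ hi]
  rw [Polynomial.derivative_C_mul, Polynomial.derivative_mul, Polynomial.derivative_X_sub_C]
  simp [Polynomial.eval_prod]

lemma prod_sign_neg (s : Finset ℕ) (f : ℕ → ℝ) (h : ∀ j ∈ s, f j < 0) :
    0 < (-1:ℝ)^s.card * ∏ j ∈ s, f j := by
  have h1 : ∏ j ∈ s, f j = (-1:ℝ)^s.card * ∏ j ∈ s, (-(f j)) := by
    rw [← Finset.prod_const, ← Finset.prod_mul_distrib]
    apply Finset.prod_congr rfl
    intros; ring
  rw [h1, ← mul_assoc, ← pow_add]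
  have h2 : 0 < ∏ j ∈ s, (-(f j)) := Finset.prod_pos (fun j hj => by linarith [h j hj])
  have h3 : (-1:ℝ)^(s.card + s.card) = 1 := Even.neg_one_pow ⟨s.card, rfl⟩
  rw [h3, one_mul]
  exact h2

lemma neg_one_pow_helper (a b : ℕ) (h : a ≤ b) : (-1:ℝ)^a * (-1:ℝ)^b = (-1:ℝ)^(b - a) := by
  rw [← pow_add, show a + b = (b - a) + 2*a from by omega, pow_add, pow_mul]
  norm_num

theorem laguerre_interlacing_iff_smallest_zero_gt
    (α : ℝ) (hα : -1 < α) (n : ℕ)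
    (hnc : ∀ t : ℝ, ¬((laguerre (α + 1) (n + 1)).eval t = 0 ∧ (laguerre α n).eval t = 0))
    (z : ℕ → ℝ)
    (hzpos : ∀ i ∈ Finset.Icc 1 (n + 1), 0 < z i)
    (hzmono : ∀ i ∈ Finset.Icc 1 (n + 1), ∀ j ∈ Finset.Icc 1 (n + 1), i < j → z i < z j)
    (hzroots : ∀ t : ℝ, (laguerre (α + 1) (n + 1)).eval t = 0 ↔ ∃ i ∈ Finset.Icc 1 (n + 1), z i = t)
    (x : ℕ → ℝ)
    (hxpos : ∀ i ∈ Finset.Icc 1 n, 0 < x i)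
    (hxmono : ∀ i ∈ Finset.Icc 1 n, ∀ j ∈ Finset.Icc 1 n, i < j → x i < x j)
    (hxroots : ∀ t : ℝ, (laguerre α n).eval t = 0 ↔ ∃ i ∈ Finset.Icc 1 n, x i = t) :
    (∀ i ∈ Finset.Icc 1 n, z i < x i ∧ x i < z (i + 1)) ↔ (n : ℝ) + 1 < z 1 := by
  classical
  have hMz : ∀ i ∈ Finset.Icc 1 (n+1), (laguerre α n).eval (z i) ≠ 0 := by
    intro i hi h
    exact hnc (z i) ⟨(hzroots (z i)).mpr ⟨i, hi, rfl⟩, h⟩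
  have hzx : ∀ i ∈ Finset.Icc 1 (n+1), ∀ j ∈ Finset.Icc 1 n, z i ≠ x j := by
    intro i hi j hj h
    apply hMz i hi
    rw [h]
    exact (hxroots (x j)).mpr ⟨j, hj, rfl⟩
  have hadd : α + 1 = α + 1 := rfl
  have hLfac := factorization' (laguerre (α+1) (n+1)) (n+1) (laguerre_natDegree _ _)
    (laguerre_ne_zero _ _) z hzmono (by
      intro t
      exact hzroots t)
  have hMfac := factorization' (laguerre α n) n (laguerre_natDegree _ _)
    (laguerre_ne_zero _ _) x hxmono hxroots
  have evalM : ∀ t : ℝ, (laguerre α n).eval t =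
      (-1:ℝ)^n / n.factorial * ∏ j ∈ Finset.Icc 1 n, (t - x j) := by
    intro t
    conv_lhs => rw [hMfac]
    rw [Polynomial.eval_mul, Polynomial.eval_C, Polynomial.eval_prod, laguerre_leadingCoeff]
    simp
  have evalL' : ∀ i ∈ Finset.Icc 1 (n+1),
      (Polynomial.derivative (laguerre (α+1) (n+1))).eval (z i) =
      (-1:ℝ)^(n+1) / (n+1).factorial * ∏ j ∈ (Finset.Icc 1 (n+1)).erase i, (z i - z j) := by
    intro i hi
    conv_lhs => rw [hLfac]
    rw [deriv_eval _ _ _ _ hi, laguerre_leadingCoeff]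
  -- counting function
  set K : ℕ → ℕ := fun i => ((Finset.Icc 1 n).filter (fun j => x j < z i)).card with hK
  have hKle : ∀ i, K i ≤ n := by
    intro i
    refine le_trans (Finset.card_filter_le _ _) ?_
    rw [Nat.card_Icc]
    omega
  -- sign of M at z i
  have hfactn : (0:ℝ) < n.factorial := Nat.cast_pos.mpr (Nat.factorial_pos n)
  have hfactn1 : (0:ℝ) < (n+1).factorial := Nat.cast_pos.mpr (Nat.factorial_pos (n+1))
  have hMsign : ∀ i ∈ Finset.Icc 1 (n+1), 0 < (-1:ℝ)^(K i) * (laguerre α n).eval (z i) := by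
    intro i hi
    rw [evalM]
    rw [← Finset.prod_filter_mul_prod_filter_not (Finset.Icc 1 n) (fun j => x j < z i)]
    set A := ∏ j ∈ (Finset.Icc 1 n).filter (fun j => x j < z i), (z i - x j) with hA0
    set B := ∏ j ∈ (Finset.Icc 1 n).filter (fun j => ¬ x j < z i), (z i - x j) with hB0
    have hA : 0 < A := by
      apply Finset.prod_pos
      intro j hj
      have := (Finset.mem_filter.mp hj).2
      linarith
    have hcardB : ((Finset.Icc 1 n).filter (fun j => ¬ x j < z i)).card = n - K i := by
      have h := Finset.card_filter_add_card_filter_not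
        (s := Finset.Icc 1 n) (p := fun j => x j < z i)
      rw [Nat.card_Icc] at h
      have hKi : K i = ((Finset.Icc 1 n).filter (fun j => x j < z i)).card := rfl
      omega
    have hB : 0 < (-1:ℝ)^(n - K i) * B := by
      rw [← hcardB]
      apply prod_sign_neg
      intro j hj
      obtain ⟨hj1, hj2⟩ := Finset.mem_filter.mp hj
      have hne := hzx i hi j hj1
      have hle : z i ≤ x j := not_lt.mp hj2
      have : z i < x j := lt_of_le_of_ne hle hne
      linarith
    have hab : (-1:ℝ)^(K i) * (-1:ℝ)^n = (-1:ℝ)^(n - K i) := neg_one_pow_helper _ _ (hKle i)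
    have heq : (-1:ℝ)^(K i) * ((-1:ℝ)^n / n.factorial * (A * B)) =
        1 / n.factorial * A * ((-1:ℝ)^(n - K i) * B) := by
      rw [← hab]; ring
    rw [heq]
    apply mul_pos (mul_pos (by positivity) hA) hB
  -- sign of L' at z i
  have hL'sign : ∀ i ∈ Finset.Icc 1 (n+1),
      0 < (-1:ℝ)^i * (Polynomial.derivative (laguerre (α+1) (n+1))).eval (z i) := by
    intro i hi
    obtain ⟨hi1, hi2⟩ := Finset.mem_Icc.mp hi
    rw [evalL' i hi]
    have hsplit : (Finset.Icc 1 (n+1)).erase i = Finset.Icc 1 (i-1) ∪ Finset.Icc (i+1) (n+1) := by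
      ext a
      simp only [Finset.mem_erase, Finset.mem_Icc, Finset.mem_union]
      omega
    have hdisj : Disjoint (Finset.Icc 1 (i-1)) (Finset.Icc (i+1) (n+1)) := by
      rw [Finset.disjoint_left]
      intro a ha hb
      rw [Finset.mem_Icc] at ha hb
      omega
    rw [hsplit, Finset.prod_union hdisj]
    set A := ∏ j ∈ Finset.Icc 1 (i-1), (z i - z j) with hA0
    set B := ∏ j ∈ Finset.Icc (i+1) (n+1), (z i - z j) with hB0
    have hA : 0 < A := by
      apply Finset.prod_pos
      intro j hj
      rw [Finset.mem_Icc] at hj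
      have := hzmono j (Finset.mem_Icc.mpr ⟨hj.1, by omega⟩) i hi (by omega)
      linarith
    have hcardB : (Finset.Icc (i+1) (n+1)).card = n + 1 - i := by
      rw [Nat.card_Icc]; omega
    have hB : 0 < (-1:ℝ)^(n + 1 - i) * B := by
      rw [← hcardB]
      apply prod_sign_neg
      intro j hj
      rw [Finset.mem_Icc] at hj
      have := hzmono i hi j (Finset.mem_Icc.mpr ⟨by omega, hj.2⟩) (by omega)
      linarith
    have hab : (-1:ℝ)^i * (-1:ℝ)^(n+1) = (-1:ℝ)^(n + 1 - i) := neg_one_pow_helper _ _ hi2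
    have heq : (-1:ℝ)^i * ((-1:ℝ)^(n+1) / (n+1).factorial * (A * B)) =
        1 / (n+1).factorial * A * ((-1:ℝ)^(n + 1 - i) * B) := by
      rw [← hab]; ring
    rw [heq]
    apply mul_pos (mul_pos (by positivity) hA) hB
  -- key sign inequality
  have hc1 : (0:ℝ) < α + (n:ℝ) + 2 := by
    have : (0:ℝ) ≤ (n:ℝ) := Nat.cast_nonneg n
    linarith
  have hc2 : (0:ℝ) < α + (n:ℝ) + 1 := by
    have : (0:ℝ) ≤ (n:ℝ) := Nat.cast_nonneg n
    linarith
  have hkey : ∀ i ∈ Finset.Icc 1 (n+1), 0 < (-1:ℝ)^(K i + i) * (((n:ℝ)+1) - z i) := by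
    intro i hi
    have hz0 := hzpos i hi
    have h1 := hMsign i hi
    have h2 := hL'sign i hi
    have hk := key_eval α hα n (z i) ((hzroots _).mpr ⟨i, hi, rfl⟩)
    set u := (Polynomial.derivative (laguerre (α+1) (n+1))).eval (z i) with hu0
    set m := (laguerre α n).eval (z i) with hm0
    have hu : u ≠ 0 := by
      intro h
      rw [h, mul_zero] at h2
      exact lt_irrefl 0 h2
    have h3 : 0 < ((-1:ℝ)^(K i) * m) * ((-1:ℝ)^i * u) := mul_pos h1 h2
    have h4 : ((-1:ℝ)^(K i) * m) * ((-1:ℝ)^i * u) =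
        ((-1:ℝ)^(K i + i) * (((n:ℝ)+1) - z i)) * (z i * u^2 / ((α+(n:ℝ)+2) * (α+(n:ℝ)+1))) := by
      rw [pow_add]
      field_simp
      linear_combination hk
    rw [h4] at h3
    have h5 : 0 < z i * u^2 / ((α+(n:ℝ)+2) * (α+(n:ℝ)+1)) := by positivity
    rcases mul_pos_iff.mp h3 with ⟨ha, _⟩ | ⟨_, hb⟩
    · exact ha
    · linarith
  constructor
  · -- interlacing → z1 > n+1
    intro hint
    have h1 : K 1 = 0 := by
      rw [hK]
      simp only []
      rw [Finset.card_eq_zero, Finset.filter_eq_empty_iff]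
      intro j hj
      obtain ⟨hj1, hj2⟩ := Finset.mem_Icc.mp hj
      have hn1 : 1 ∈ Finset.Icc 1 n := Finset.mem_Icc.mpr ⟨le_refl 1, by omega⟩
      have hzx1 := (hint 1 hn1).1
      have hx1j : x 1 ≤ x j := by
        rcases eq_or_lt_of_le hj1 with he | hl
        · rw [← he]
        · exact le_of_lt (hxmono 1 hn1 j hj hl)
      intro hcon
      linarith
    have h2 := hkey 1 (Finset.mem_Icc.mpr ⟨le_refl 1, by omega⟩)
    rw [h1] at h2
    norm_num at h2
    linarith
  · -- z1 > n+1 → interlacing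
    intro hz1
    have h1mem : (1:ℕ) ∈ Finset.Icc 1 (n+1) := Finset.mem_Icc.mpr ⟨le_refl 1, by omega⟩
    have hzN : ∀ i ∈ Finset.Icc 1 (n+1), ((n:ℝ)+1) < z i := by
      intro i hi
      obtain ⟨hi1, hi2⟩ := Finset.mem_Icc.mp hi
      rcases eq_or_lt_of_le hi1 with he | hl
      · rw [← he]; exact hz1
      · exact lt_trans hz1 (hzmono 1 h1mem i hi hl)
    have hodd : ∀ i ∈ Finset.Icc 1 (n+1), Odd (K i + i) := by
      intro i hi
      have hk2 := hkey i hi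
      have hneg : ((n:ℝ)+1) - z i < 0 := by linarith [hzN i hi]
      by_contra he
      have heven : Even (K i + i) := Nat.not_odd_iff_even.mp he
      rw [Even.neg_one_pow heven, one_mul] at hk2
      linarith
    have hmono : ∀ i ∈ Finset.Icc 1 (n+1), ∀ j ∈ Finset.Icc 1 (n+1), i ≤ j → K i ≤ K j := by
      intro i hi j hj hij
      apply Finset.card_le_card
      intro a ha
      rw [Finset.mem_filter] at ha ⊢
      refine ⟨ha.1, ?_⟩
      rcases eq_or_lt_of_le hij with he | hl
      · rw [← he]; exact ha.2
      · exact lt_trans ha.2 (hzmono i hi j hj hl)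
    have hstep : ∀ i, 1 ≤ i → i ≤ n → K i + 1 ≤ K (i+1) := by
      intro i h1 h2
      have hle := hmono i (Finset.mem_Icc.mpr ⟨h1, by omega⟩) (i+1)
        (Finset.mem_Icc.mpr ⟨by omega, by omega⟩) (by omega)
      obtain ⟨a, ha⟩ := hodd i (Finset.mem_Icc.mpr ⟨h1, by omega⟩)
      obtain ⟨b, hb⟩ := hodd (i+1) (Finset.mem_Icc.mpr ⟨by omega, by omega⟩)
      omega
    have hchain : ∀ d i, 1 ≤ i → i + d ≤ n+1 → K i + d ≤ K (i+d) := by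
      intro d
      induction d with
      | zero => intro i _ _; simp
      | succ d ih =>
        intro i h1 h2
        have ha := ih i h1 (by omega)
        have hb := hstep (i+d) (by omega) (by omega)
        have he : i + (d+1) = (i+d)+1 := rfl
        rw [he]
        omega
    have hKval : ∀ i, 1 ≤ i → i ≤ n+1 → K i = i - 1 := by
      intro i h1 h2
      have ha := hchain (i-1) 1 le_rfl (by omega)
      have he1 : 1 + (i-1) = i := by omega
      rw [he1] at ha
      have hb := hchain (n+1-i) i h1 (by omega)
      have he2 : i + (n+1-i) = n+1 := by omega
      rw [he2] at hb
      have hc := hKle (n+1)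
      omega
    intro i hi
    obtain ⟨hi1, hi2⟩ := Finset.mem_Icc.mp hi
    have hKi := hKval i hi1 (by omega)
    have hKi1 := hKval (i+1) (by omega) (by omega)
    constructor
    · by_contra h
      push_neg at h
      have hne : z i ≠ x i := hzx i (Finset.mem_Icc.mpr ⟨hi1, by omega⟩) i hi
      have hlt : x i < z i := lt_of_le_of_ne h (fun e => hne e.symm)
      have hsub : Finset.Icc 1 i ⊆ (Finset.Icc 1 n).filter (fun j => x j < z i) := by
        intro j hj
        rw [Finset.mem_Icc] at hj
        rw [Finset.mem_filter, Finset.mem_Icc]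
        refine ⟨⟨hj.1, by omega⟩, ?_⟩
        rcases eq_or_lt_of_le hj.2 with he | hl
        · rw [he]; exact hlt
        · have := hxmono j (Finset.mem_Icc.mpr ⟨hj.1, by omega⟩) i hi hl
          linarith
      have hcard := Finset.card_le_card hsub
      rw [Nat.card_Icc] at hcard
      have : K i = ((Finset.Icc 1 n).filter (fun j => x j < z i)).card := rfl
      omega
    · by_contra h
      push_neg at h
      have hsub : (Finset.Icc 1 n).filter (fun j => x j < z (i+1)) ⊆ Finset.Icc 1 (i-1) := by
        intro j hj
        rw [Finset.mem_filter, Finset.mem_Icc] at hj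
        rw [Finset.mem_Icc]
        refine ⟨hj.1.1, ?_⟩
        by_contra hc
        push_neg at hc
        have hxj : x i ≤ x j := by
          rcases Nat.lt_or_ge i j with hl | hg
          · exact le_of_lt (hxmono i hi j (Finset.mem_Icc.mpr ⟨by omega, hj.1.2⟩) hl)
          · have : j = i := by omega
            rw [this]
        linarith [hj.2]
      have hcard := Finset.card_le_card hsub
      rw [Nat.card_Icc] at hcard
      have : K (i+1) = ((Finset.Icc 1 n).filter (fun j => x j < z (i+1))).card := rfl
      omega
end

section
/- For every real α and every n ∈ ℕ, the polynomial identity x² · L_n^{(α+3)}(x) = (x² + (α + 1 − n)x + (α+1)(α+2)) · L_n^{(α+1)}(x) − (α + n + 1)(x + α + 2) · L_n^{(α)}(x) holds in ℝ[x]. -/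
open Polynomial Finset

lemma coeff_laguerre (α : ℝ) (n k : ℕ) :
    (laguerre α n).coeff k = if k ≤ n then
      (-1 : ℝ) ^ k * (∏ j ∈ Finset.Icc (k + 1) n, (α + (j : ℝ))) /
        ((n - k).factorial * k.factorial) else 0 := by
  simp [laguerre, Polynomial.finset_sum_coeff, Polynomial.coeff_C_mul,
    Polynomial.coeff_X_pow, Finset.sum_ite_eq', Nat.lt_succ_iff]

-- L2: peel bottom
lemma peel_bot (α : ℝ) (k n : ℕ) (h : k + 1 ≤ n) :
    ∏ j ∈ Icc (k+1) n, (α + (j:ℝ)) = (α + (k:ℝ) + 1) * ∏ j ∈ Icc (k+2) n, (α + (j:ℝ)) := by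
  induction n, h using Nat.le_induction with
  | base => simp [add_assoc]
  | succ n h ih =>
      rw [Finset.prod_Icc_succ_top (by omega), Finset.prod_Icc_succ_top (by omega), ih]
      ring

-- L3: shift
lemma shift_prod (α : ℝ) (k n : ℕ) (h : k ≤ n) :
    ∏ j ∈ Icc (k+1) n, (α + 1 + (j:ℝ)) = ∏ j ∈ Icc (k+2) (n+1), (α + (j:ℝ)) := by
  induction n, h using Nat.le_induction with
  | base => rw [Finset.Icc_eq_empty (by omega), Finset.Icc_eq_empty (by omega)]; simp
  | succ n h ih =>
      rw [Finset.prod_Icc_succ_top (by omega), Finset.prod_Icc_succ_top (by omega), ih]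
      push_cast; ring

-- P
lemma key_prod (α : ℝ) (k n : ℕ) (h : k ≤ n) :
    (α + (k:ℝ) + 1) * ∏ j ∈ Icc (k+1) n, (α + 1 + (j:ℝ))
      = (α + (n:ℝ) + 1) * ∏ j ∈ Icc (k+1) n, (α + (j:ℝ)) := by
  rw [shift_prod α k n h, ← peel_bot α k (n+1) (by omega),
    Finset.prod_Icc_succ_top (by omega)]
  push_cast; ring

lemma star (α : ℝ) (n : ℕ) :
    X * laguerre (α + 2) n =
      (X + C (α + 1)) * laguerre (α + 1) n - C (α + (n:ℝ) + 1) * laguerre α n := by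
  ext m
  rw [coeff_sub, add_mul, coeff_add, coeff_C_mul, coeff_C_mul]
  match m with
  | 0 =>
      simp only [mul_coeff_zero, coeff_X_zero, zero_mul, coeff_laguerre, Nat.zero_le, if_true,
        zero_add, pow_zero, one_mul]
      have := key_prod α 0 n (Nat.zero_le n)
      simp only [Nat.sub_zero, Nat.factorial_zero, Nat.cast_one, mul_one, zero_add] at this ⊢
      push_cast at this
      field_simp
      linarith [this]
  | k + 1 =>
      rw [coeff_X_mul, coeff_X_mul, coeff_laguerre, coeff_laguerre, coeff_laguerre, coeff_laguerre]
      rcases lt_trichotomy k n with hk | hk | hk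
      · rw [if_pos hk.le, if_pos hk.le, if_pos (by omega : k + 1 ≤ n), if_pos (by omega : k + 1 ≤ n)]
        have h1 : ∏ j ∈ Icc (k+1) n, (α+2+(j:ℝ))
            = (α+(n:ℝ)+2) * ∏ j ∈ Icc (k+2) n, (α+1+(j:ℝ)) := by
          have h := shift_prod (α+1) k n hk.le
          rw [Finset.prod_Icc_succ_top (by omega)] at h
          calc ∏ j ∈ Icc (k+1) n, (α+2+(j:ℝ))
              = ∏ j ∈ Icc (k+1) n, (α+1+1+(j:ℝ)) :=
                Finset.prod_congr rfl fun j _ => by ring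
            _ = _ := by rw [h]; push_cast; ring
        have h2 : ∏ j ∈ Icc (k+1) n, (α+1+(j:ℝ))
            = (α+(k:ℝ)+2) * ∏ j ∈ Icc (k+2) n, (α+1+(j:ℝ)) := by
          rw [peel_bot (α+1) k n hk]; ring
        have h3 := key_prod α (k+1) n hk
        push_cast at h3
        rw [show k + 1 + 1 = k + 2 by ring] at h3 ⊢
        have e : n - k = (n-(k+1)) + 1 := by omega
        have hf1 : ((n-k).factorial : ℝ) = ((n:ℝ)-(k:ℝ)) * ((n-(k+1)).factorial : ℝ) := by
          rw [e, Nat.factorial_succ]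
          have : (((n-(k+1)) : ℕ) : ℝ) = (n:ℝ) - (k:ℝ) - 1 := by
            push_cast [Nat.cast_sub (by omega : k+1 ≤ n)]; ring
          push_cast [this]; ring
        rw [h1, h2, hf1, Nat.factorial_succ]
        have hq := Nat.factorial_pos (n-(k+1))
        have hk2 := Nat.factorial_pos k
        have hnk : (n:ℝ) - (k:ℝ) ≠ 0 := by
          have : (k:ℝ) < (n:ℝ) := by exact_mod_cast hk
          linarith
        push_cast
        field_simp
        linear_combination ((-1:ℝ)^k * ((n:ℝ)-(k:ℝ))) * h3
      · -- k = n
        subst hk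
        rw [if_pos le_rfl, if_pos le_rfl, if_neg (by omega), if_neg (by omega)]
        rw [Finset.Icc_eq_empty (by omega : ¬ k + 1 ≤ k)]
        simp
      · rw [if_neg (by omega), if_neg (by omega), if_neg (by omega), if_neg (by omega)]
        ring

theorem laguerre_mixed_recurrence_equal_deg_param_three (α : ℝ) (n : ℕ) :
    Polynomial.X ^ 2 * laguerre (α + 3) n =
      (Polynomial.X ^ 2 + Polynomial.C (α + 1 - (n : ℝ)) * Polynomial.X +
          Polynomial.C ((α + 1) * (α + 2))) * laguerre (α + 1) n -
        Polynomial.C (α + (n : ℝ) + 1) * (Polynomial.X + Polynomial.C (α + 2)) *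
          laguerre α n := by
  have s1 := star (α + 1) n
  have s0 := star α n
  rw [show α + 1 + 2 = α + 3 by ring, show α + 1 + 1 = α + 2 by ring] at s1
  simp only [map_add, map_sub, map_mul, map_one, map_ofNat, map_natCast] at s0 s1 ⊢
  linear_combination X * s1 + (X + C α + 2) * s0
end
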